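/- In a P-Frobenius algebra A with Frobenius homomorphism φ, there is a unique k-algebra automorphism ν of A (the Nakayama automorphism) satisfying φ(ab) = φ(ν(b)a) for all a, b ∈ A (equivalently aφ = φν(a) as elements of Hom_k(A,P)). -/

import Mathlib

def IsInvertibleModule (k P : Type*) [CommRing k] [AddCommGroup P] [Module k P] : Prop :=
  Module.Finite k P ∧ Module.Projective k P ∧ Function.Bijective (contractRight k P)

open Module TensorProduct LinearMap Function

section Aux

variable {k : Type*} [CommRing k] {P : Type*} [AddCommGroup P] [Module k P]

/-- An invertible module is faithful. -/
lemma aux_smul_eq_zero (hc : Bijective (contractRight k P)) {c : k}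
    (h : ∀ p : P, c • p = 0) : c = 0 := by
  have h0 : ∀ t : P ⊗[k] Module.Dual k P, c • t = 0 := by
    intro t
    induction t using TensorProduct.induction_on with
    | zero => simp
    | tmul p q => rw [smul_tmul', h p, zero_tmul]
    | add x y hx hy => rw [smul_add, hx, hy, add_zero]
  obtain ⟨t, ht⟩ := hc.2 1
  have h1 := map_smul (contractRight k P) c t
  rw [h0 t, ht, map_zero] at h1
  simpa using h1.symm

/-- Every endomorphism of an invertible module is scalar. -/
lemma aux_exists_smul_id (hc : Bijective (contractRight k P)) (f : P →ₗ[k] P) :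
    ∃ cf : k, ∀ p, f p = cf • p := by
  set Q := Module.Dual k P with hQ
  have hc' : Bijective (contractLeft k P) := by
    have hcl : contractLeft k P =
        (contractRight k P) ∘ₗ (TensorProduct.comm k Q P).toLinearMap := by
      apply TensorProduct.ext'
      intro q p
      simp only [coe_comp, LinearEquiv.coe_coe, Function.comp_apply,
        TensorProduct.comm_tmul, contractLeft_apply, contractRight_apply]
      exact (contractRight_apply q p).symm
    rw [hcl, coe_comp, LinearEquiv.coe_coe]
    exact hc.comp (TensorProduct.comm k Q P).bijective
  let E : P ⊗[k] Q ≃ₗ[k] k := LinearEquiv.ofBijective (contractRight k P) hc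
  set lam : k := E ((f.rTensor Q) (E.symm 1)) with hlam
  have key : ∀ x : k, E ((f.rTensor Q) (E.symm x)) = lam * x := by
    intro x
    have hx : E.symm x = x • E.symm 1 := by rw [← map_smul, smul_eq_mul, mul_one]
    rw [hx, map_smul, map_smul, smul_eq_mul, mul_comm, hlam]
  have h1 : ∀ t : P ⊗[k] Q, f.rTensor Q t = lam • t := by
    intro t
    apply E.injective
    rw [map_smul, smul_eq_mul]
    have hk := key (E t)
    rwa [E.symm_apply_apply] at hk
  have h2 : f.rTensor (Q ⊗[k] P) = lam • LinearMap.id := by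
    apply TensorProduct.ext'
    intro p u
    simp only [rTensor_tmul, LinearMap.smul_apply, id_coe, id_eq]
    induction u using TensorProduct.induction_on with
    | zero => simp
    | tmul q p' =>
      have h1' := h1 (p ⊗ₜ q)
      rw [rTensor_tmul] at h1'
      have := congrArg
        (fun s : P ⊗[k] Q => (TensorProduct.assoc k P Q P) (s ⊗ₜ[k] p')) h1'
      simpa [TensorProduct.assoc_tmul, smul_tmul'] using this
    | add x y hx hy => rw [tmul_add, tmul_add, smul_add, hx, hy]
  let cLeq : Q ⊗[k] P ≃ₗ[k] k := LinearEquiv.ofBijective (contractLeft k P) hc'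
  let e : P ⊗[k] (Q ⊗[k] P) ≃ₗ[k] P :=
    (LinearEquiv.lTensor P cLeq) ≪≫ₗ TensorProduct.rid k P
  have hnat : ∀ t : P ⊗[k] (Q ⊗[k] P), f (e t) = e (f.rTensor (Q ⊗[k] P) t) := by
    intro t
    have heq : f ∘ₗ e.toLinearMap = e.toLinearMap ∘ₗ f.rTensor (Q ⊗[k] P) := by
      apply TensorProduct.ext'
      intro p u
      simp [e, LinearEquiv.lTensor, TensorProduct.congr_tmul, TensorProduct.rid_tmul,
        map_smul]
    exact DFunLike.congr_fun heq t
  refine ⟨lam, fun p => ?_⟩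
  calc f p = f (e (e.symm p)) := by rw [e.apply_symm_apply]
    _ = e (f.rTensor (Q ⊗[k] P) (e.symm p)) := hnat _
    _ = e (lam • e.symm p) := by rw [h2]; simp
    _ = lam • p := by rw [map_smul, e.apply_symm_apply]

/-- `dualTensorHom` is bijective for finite projective modules. -/
lemma aux_dualTensorHom_bijective (M N : Type*) [AddCommGroup M] [Module k M]
    [Module.Finite k M] [Module.Projective k M] [AddCommGroup N] [Module k N] :
    Bijective (dualTensorHom k M N) := by
  obtain ⟨n, π, hπ⟩ := Module.Finite.exists_fin' k M
  obtain ⟨i, hi⟩ := Module.projective_lifting_property π LinearMap.id hπ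
  set F := Fin n → k with hF
  let eF : Module.Dual k F ⊗[k] N ≃ₗ[k] (F →ₗ[k] N) := dualTensorHomEquiv k F N
  have heF : ∀ x, eF x = dualTensorHom k F N x := fun x =>
    rfl
  -- naturality of dualTensorHom
  have natA : ∀ t : Module.Dual k F ⊗[k] N,
      dualTensorHom k M N ((i.dualMap).rTensor N t) = (dualTensorHom k F N t) ∘ₗ i := by
    intro t
    have heq : (dualTensorHom k M N) ∘ₗ ((i.dualMap).rTensor N) =
        (LinearMap.lcomp k N i) ∘ₗ dualTensorHom k F N := by
      apply TensorProduct.ext'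
      intro f nn
      ext x
      simp [dualTensorHom_apply]
      rfl
    exact DFunLike.congr_fun heq t
  have natB : ∀ t : Module.Dual k M ⊗[k] N,
      dualTensorHom k F N ((π.dualMap).rTensor N t) = (dualTensorHom k M N t) ∘ₗ π := by
    intro t
    have heq : (dualTensorHom k F N) ∘ₗ ((π.dualMap).rTensor N) =
        (LinearMap.lcomp k N π) ∘ₗ dualTensorHom k M N := by
      apply TensorProduct.ext'
      intro f nn
      ext x
      simp [dualTensorHom_apply]
      rfl
    exact DFunLike.congr_fun heq t
  let inv : (M →ₗ[k] N) →ₗ[k] Module.Dual k M ⊗[k] N :=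
    (i.dualMap.rTensor N) ∘ₗ (eF.symm.toLinearMap) ∘ₗ (LinearMap.lcomp k N π)
  have hright : ∀ g : M →ₗ[k] N, dualTensorHom k M N (inv g) = g := by
    intro g
    have h1 : inv g = i.dualMap.rTensor N (eF.symm (g ∘ₗ π)) := rfl
    rw [h1, natA (eF.symm (g ∘ₗ π))]
    rw [← heF (eF.symm (g ∘ₗ π)), eF.apply_symm_apply]
    rw [LinearMap.comp_assoc, hi, LinearMap.comp_id]
  have hleft : ∀ t : Module.Dual k M ⊗[k] N, inv (dualTensorHom k M N t) = t := by
    intro t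
    have h1 : inv (dualTensorHom k M N t) =
        i.dualMap.rTensor N (eF.symm ((dualTensorHom k M N t) ∘ₗ π)) := rfl
    rw [h1, ← natB t]
    have h2 : eF.symm (dualTensorHom k F N ((π.dualMap).rTensor N t)) =
        (π.dualMap).rTensor N t := by
      rw [← heF ((π.dualMap).rTensor N t), eF.symm_apply_apply]
    rw [h2, ← LinearMap.rTensor_comp_apply, dualMap_comp_dualMap, hi, dualMap_id,
      rTensor_id, id_apply]
  exact ⟨Function.LeftInverse.injective hleft, fun g => ⟨inv g, hright g⟩⟩

/-- Finite projective modules are reflexive with respect to an invertible module `P`. -/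
lemma aux_evP_bijective (hc : Bijective (contractRight k P)) (M : Type*) [AddCommGroup M]
    [Module k M] [Module.Finite k M] [Module.Projective k M] :
    Bijective ⇑((LinearMap.id : (M →ₗ[k] P) →ₗ[k] (M →ₗ[k] P)).flip) := by
  set ev := (LinearMap.id : (M →ₗ[k] P) →ₗ[k] (M →ₗ[k] P)).flip with hev
  have hJ := aux_dualTensorHom_bijective (k := k) M P
  let J : Module.Dual k M ⊗[k] P ≃ₗ[k] (M →ₗ[k] P) := .ofBijective _ hJ
  have hσbij : Bijective ⇑(LinearMap.lsmul k P) := by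
    constructor
    · intro c d hcd
      have hyp : ∀ p : P, (c - d) • p = 0 := by
        intro p
        rw [sub_smul, sub_eq_zero]
        exact DFunLike.congr_fun hcd p
      have := aux_smul_eq_zero hc hyp
      exact sub_eq_zero.mp this
    · intro f
      obtain ⟨cf, hcf⟩ := aux_exists_smul_id hc f
      exact ⟨cf, by ext p; simp [hcf p]⟩
  let σ : (P →ₗ[k] P) ≃ₗ[k] k := (LinearEquiv.ofBijective _ hσbij).symm
  have hσ : ∀ c : k, σ (LinearMap.lsmul k P c) = c := fun c =>
    (LinearEquiv.ofBijective _ hσbij).symm_apply_apply c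
  let big : ((M →ₗ[k] P) →ₗ[k] P) ≃ₗ[k] Module.Dual k (Module.Dual k M) :=
    (LinearEquiv.arrowCongr J.symm (LinearEquiv.refl k P)) ≪≫ₗ
      (TensorProduct.lift.equiv (RingHom.id k) (Module.Dual k M) P P).symm ≪≫ₗ
      (LinearEquiv.arrowCongr (LinearEquiv.refl k (Module.Dual k M)) σ)
  have hkey : ∀ m : M, big (ev m) = Module.Dual.eval k M m := by
    intro m
    ext f
    have h1 : big (ev m) f =
        σ ((TensorProduct.lift.equiv (RingHom.id k) (Module.Dual k M) P P).symm ((ev m) ∘ₗ J.toLinearMap) f) := by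
      simp [big, LinearEquiv.arrowCongr]
    rw [h1]
    have h2 : (TensorProduct.lift.equiv (RingHom.id k) (Module.Dual k M) P P).symm
        ((ev m) ∘ₗ J.toLinearMap) f = LinearMap.lsmul k P (f m) := by
      ext p
      rw [TensorProduct.lift.equiv_symm_apply]
      have hJfp : (ev m) (J (f ⊗ₜ[k] p)) = (dualTensorHom k M P (f ⊗ₜ[k] p)) m := rfl
      simp only [coe_comp, LinearEquiv.coe_coe, Function.comp_apply, hJfp,
        dualTensorHom_apply, lsmul_apply]
    rw [h2, hσ]
    rfl
  have hcomp : ⇑ev = ⇑big.symm ∘ ⇑(Module.Dual.eval k M) := by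
    funext m
    rw [Function.comp_apply, ← hkey m, big.symm_apply_apply]
  rw [hcomp]
  exact big.symm.bijective.comp (Module.bijective_dual_eval k M)

end Aux

/-- Existence and uniqueness of the Nakayama automorphism: if `φ : A → P` is a Frobenius
homomorphism for the `P`-Frobenius algebra `A` (i.e. `a ↦ φ·a = φ(a·—)` is an isomorphism
`A ≅ Hom_k(A,P)`), then there is a unique `k`-algebra automorphism `ν` of `A` with
`φ(ab) = φ(ν(b)a)` for all `a, b ∈ A`. -/
theorem nakayama_exists_unique (k A P : Type*) [CommRing k] [AddCommGroup P] [Module k P]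
    [Ring A] [Algebra k A] (hP : IsInvertibleModule k P)
    (hfin : Module.Finite k A) (hproj : Module.Projective k A)
    (φ : A →ₗ[k] P)
    (hFrob : Function.Bijective fun a : A => φ ∘ₗ LinearMap.mulLeft k a) :
    ∃! ν : A ≃ₐ[k] A, ∀ a b : A, φ (a * b) = φ (ν b * a) := by
  haveI := hfin
  haveI := hproj
  obtain ⟨-, -, hc⟩ := hP
  classical
  -- the left multiplication map Φ₀ a = φ ∘ (a * ·)
  let Φ₀ : A →ₗ[k] (A →ₗ[k] P) := (LinearMap.llcomp k A A P φ) ∘ₗ (LinearMap.mul k A)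
  have hΦap : ∀ a x : A, Φ₀ a x = φ (a * x) := by
    intro a x
    simp [Φ₀, LinearMap.mul_apply']
  have hΦbij : Function.Bijective ⇑Φ₀ := by
    have hΦ₀ : ⇑Φ₀ = fun a : A => φ ∘ₗ LinearMap.mulLeft k a := by
      funext a
      ext x
      simp [hΦap a x]
    rw [hΦ₀]
    exact hFrob
  let Φ : A ≃ₗ[k] (A →ₗ[k] P) := .ofBijective Φ₀ hΦbij
  -- the right multiplication map Ψ₀ b = φ ∘ (· * b)
  let Ψ₀ : A →ₗ[k] (A →ₗ[k] P) := (LinearMap.llcomp k A A P φ) ∘ₗ (LinearMap.mul k A).flip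
  have hΨap : ∀ b a : A, Ψ₀ b a = φ (a * b) := by
    intro b a
    simp [Ψ₀, LinearMap.mul_apply']
  -- Ψ₀ is bijective, via reflexivity with respect to P
  have hev := aux_evP_bijective hc A
  have hΨbij : Function.Bijective ⇑Ψ₀ := by
    have hfact : ⇑Ψ₀ = ⇑(LinearMap.lcomp k P Φ₀) ∘
        ⇑((LinearMap.id : (A →ₗ[k] P) →ₗ[k] (A →ₗ[k] P)).flip) := by
      funext b
      ext a
      simp [hΨap, hΦap]
    have hpre : Function.Bijective ⇑(LinearMap.lcomp k P Φ₀) := by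
      have hco : ⇑(LinearMap.lcomp k P Φ₀) =
          ⇑(LinearEquiv.arrowCongr Φ.symm (LinearEquiv.refl k P)) := by
        funext F
        ext a
        simp [LinearEquiv.arrowCongr, Φ]
      rw [hco]
      exact (LinearEquiv.arrowCongr Φ.symm (LinearEquiv.refl k P)).bijective
    rw [hfact]
    exact hpre.comp hev
  -- the Nakayama map
  let ν₀ : A →ₗ[k] A := Φ.symm.toLinearMap ∘ₗ Ψ₀
  have hν₀ : ∀ b : A, Φ₀ (ν₀ b) = Ψ₀ b := by
    intro b
    show Φ₀ (Φ.symm (Ψ₀ b)) = Ψ₀ b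
    exact Φ.apply_symm_apply (Ψ₀ b)
  have hkey : ∀ a b : A, φ (ν₀ b * a) = φ (a * b) := by
    intro a b
    have h1 := DFunLike.congr_fun (hν₀ b) a
    rwa [hΦap, hΨap] at h1
  have hinj : ∀ c d : A, (∀ a : A, φ (c * a) = φ (d * a)) → c = d := by
    intro c d h
    apply hΦbij.1
    ext a
    rw [hΦap, hΦap]
    exact h a
  have hone : ν₀ 1 = 1 := by
    apply hinj
    intro a
    rw [hkey a 1, mul_one, one_mul]
  have hmul : ∀ b c : A, ν₀ (b * c) = ν₀ b * ν₀ c := by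
    intro b c
    apply hinj
    intro a
    rw [hkey a (b * c)]
    calc φ (a * (b * c)) = φ ((a * b) * c) := by rw [mul_assoc]
      _ = φ (ν₀ c * (a * b)) := (hkey (a * b) c).symm
      _ = φ ((ν₀ c * a) * b) := by rw [mul_assoc]
      _ = φ (ν₀ b * (ν₀ c * a)) := (hkey (ν₀ c * a) b).symm
      _ = φ ((ν₀ b * ν₀ c) * a) := by rw [mul_assoc]
  have hνbij : Function.Bijective ⇑ν₀ := by
    have : ⇑ν₀ = ⇑Φ.symm ∘ ⇑Ψ₀ := rfl
    rw [this]
    exact Φ.symm.bijective.comp hΨbij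
  let νalg : A →ₐ[k] A := AlgHom.ofLinearMap ν₀ hone hmul
  let ν : A ≃ₐ[k] A := AlgEquiv.ofBijective νalg hνbij
  refine ⟨ν, fun a b => (hkey a b).symm, ?_⟩
  intro ν' hν'
  refine AlgEquiv.coe_algHom_injective (AlgHom.ext fun b => ?_)
  show ν' b = ν b
  apply hinj
  intro a
  exact (hν' a b).symm.trans (hkey a b).symm
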